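/- arXiv:1908.09751 — 5 statements merged into one kernel-verified Lean document; each statement's English description precedes it below -/
import Mathlib

section
/- Let Ω ⊆ ℝ² be open and let w₀, w₁, w₂ : Ω → ℝ be functions of class C³ on Ω satisfying ∇²w₂ + 2∂ₓᵧw₁ = 0 on Ω. Define u = ∂ₓw₀ + ∂ₓw₁ + ∂ᵧw₂ and v = ∂ᵧw₀ − ∂ᵧw₁ − ∂ₓw₂. Then the convective terms h₁ = u ∂ₓu + v ∂ᵧu and h₂ = u ∂ₓv + v ∂ᵧv satisfy ∂ᵧh₁ = ∂ₓh₂ on Ω. -/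
/-- Partial derivative along the first coordinate direction. -/
noncomputable def pdx (w : ℝ × ℝ → ℝ) : ℝ × ℝ → ℝ := fun p => fderiv ℝ w p (1, 0)

/-- Partial derivative along the second coordinate direction. -/
noncomputable def pdy (w : ℝ × ℝ → ℝ) : ℝ × ℝ → ℝ := fun p => fderiv ℝ w p (0, 1)

/-- Laplacian ∇²w = ∂ₓₓw + ∂ᵧᵧw. -/
noncomputable def lap (w : ℝ × ℝ → ℝ) : ℝ × ℝ → ℝ := fun p => pdx (pdx w) p + pdy (pdy w) p

open Filter Topology

private lemma fderiv_pd_apply {f : ℝ × ℝ → ℝ} {p : ℝ × ℝ} (hf : ContDiffAt ℝ 2 f p)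
    (e v : ℝ × ℝ) :
    fderiv ℝ (fun q => fderiv ℝ f q v) p e = fderiv ℝ (fderiv ℝ f) p e v := by
  have hd : DifferentiableAt ℝ (fderiv ℝ f) p :=
    (hf.fderiv_right (m := 1) (by norm_num)).differentiableAt (by norm_num)
  rw [fderiv_clm_apply hd (differentiableAt_const v)]
  simp

private lemma pdx_pdy_comm {f : ℝ × ℝ → ℝ} {p : ℝ × ℝ} (hf : ContDiffAt ℝ 2 f p) :
    pdx (pdy f) p = pdy (pdx f) p := by
  have h := hf.isSymmSndFDerivAt (by simp [minSmoothness_of_isRCLikeNormedField])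
  show fderiv ℝ (fun q => fderiv ℝ f q (0,1)) p (1,0) = fderiv ℝ (fun q => fderiv ℝ f q (1,0)) p (0,1)
  rw [fderiv_pd_apply hf, fderiv_pd_apply hf]
  exact h.eq _ _

private lemma contDiffOn_pdx {n : ℕ} {w : ℝ × ℝ → ℝ} {Ω : Set (ℝ × ℝ)} (hΩ : IsOpen Ω)
    (hw : ContDiffOn ℝ (n + 1) w Ω) : ContDiffOn ℝ n (pdx w) Ω :=
  (hw.fderiv_of_isOpen hΩ (by norm_cast)).clm_apply contDiffOn_const

private lemma contDiffOn_pdy {n : ℕ} {w : ℝ × ℝ → ℝ} {Ω : Set (ℝ × ℝ)} (hΩ : IsOpen Ω)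
    (hw : ContDiffOn ℝ (n + 1) w Ω) : ContDiffOn ℝ n (pdy w) Ω :=
  (hw.fderiv_of_isOpen hΩ (by norm_cast)).clm_apply contDiffOn_const

theorem curl_of_convective_terms_vanishes
    (Ω : Set (ℝ × ℝ)) (hΩ : IsOpen Ω)
    (w₀ w₁ w₂ : ℝ × ℝ → ℝ)
    (hw₀ : ContDiffOn ℝ 3 w₀ Ω) (hw₁ : ContDiffOn ℝ 3 w₁ Ω) (hw₂ : ContDiffOn ℝ 3 w₂ Ω)
    (hφ0 : ∀ p ∈ Ω, lap w₂ p + 2 * pdx (pdy w₁) p = 0)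
    (u v h₁ h₂ : ℝ × ℝ → ℝ)
    (hu : ∀ p, u p = pdx w₀ p + pdx w₁ p + pdy w₂ p)
    (hv : ∀ p, v p = pdy w₀ p - pdy w₁ p - pdx w₂ p)
    (hh₁ : ∀ p, h₁ p = u p * pdx u p + v p * pdy u p)
    (hh₂ : ∀ p, h₂ p = u p * pdx v p + v p * pdy v p) :
    ∀ p ∈ Ω, pdy h₁ p = pdx h₂ p := by
  have hu' : u = fun q => pdx w₀ q + pdx w₁ q + pdy w₂ q := funext hu
  have hv' : v = fun q => pdy w₀ q - pdy w₁ q - pdx w₂ q := funext hv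
  have hh₁' : h₁ = fun q => u q * pdx u q + v q * pdy u q := funext hh₁
  have hh₂' : h₂ = fun q => u q * pdx v q + v q * pdy v q := funext hh₂
  -- second-order smoothness of first partials of the wᵢ
  have h0x : ContDiffOn ℝ 2 (pdx w₀) Ω := contDiffOn_pdx hΩ (hw₀.of_le (by norm_num))
  have h0y : ContDiffOn ℝ 2 (pdy w₀) Ω := contDiffOn_pdy hΩ (hw₀.of_le (by norm_num))
  have h1x : ContDiffOn ℝ 2 (pdx w₁) Ω := contDiffOn_pdx hΩ (hw₁.of_le (by norm_num))
  have h1y : ContDiffOn ℝ 2 (pdy w₁) Ω := contDiffOn_pdy hΩ (hw₁.of_le (by norm_num))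
  have h2x : ContDiffOn ℝ 2 (pdx w₂) Ω := contDiffOn_pdx hΩ (hw₂.of_le (by norm_num))
  have h2y : ContDiffOn ℝ 2 (pdy w₂) Ω := contDiffOn_pdy hΩ (hw₂.of_le (by norm_num))
  have hu2 : ContDiffOn ℝ 2 u Ω := by rw [hu']; exact (h0x.add h1x).add h2y
  have hv2 : ContDiffOn ℝ 2 v Ω := by rw [hv']; exact (h0y.sub h1y).sub h2x
  have hux : ContDiffOn ℝ 1 (pdx u) Ω := contDiffOn_pdx hΩ (hu2.of_le (by norm_num))
  have huy : ContDiffOn ℝ 1 (pdy u) Ω := contDiffOn_pdy hΩ (hu2.of_le (by norm_num))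
  have hvx : ContDiffOn ℝ 1 (pdx v) Ω := contDiffOn_pdx hΩ (hv2.of_le (by norm_num))
  have hvy : ContDiffOn ℝ 1 (pdy v) Ω := contDiffOn_pdy hΩ (hv2.of_le (by norm_num))
  have dAt : ∀ {n : ℕ} {f : ℝ × ℝ → ℝ}, ContDiffOn ℝ (n + 1) f Ω → ∀ q ∈ Ω,
      DifferentiableAt ℝ f q := fun h q hq =>
    ((h q hq).contDiffAt (hΩ.mem_nhds hq)).differentiableAt (by simp)
  have cAt : ∀ {f : ℝ × ℝ → ℝ}, ContDiffOn ℝ 2 f Ω → ∀ q ∈ Ω, ContDiffAt ℝ 2 f q :=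
    fun h q hq => (h q hq).contDiffAt (hΩ.mem_nhds hq)
  -- the vorticity vanishes on Ω
  have hA : ∀ q ∈ Ω, pdx v q = pdy u q := by
    intro q hq
    have e1 : pdx v q = pdx (pdy w₀) q - pdx (pdy w₁) q - pdx (pdx w₂) q := by
      rw [hv']
      show fderiv ℝ (fun r => pdy w₀ r - pdy w₁ r - pdx w₂ r) q (1, 0) = _
      rw [fderiv_fun_sub ((dAt h0y q hq).fun_sub (dAt h1y q hq)) (dAt h2x q hq),
        fderiv_fun_sub (dAt h0y q hq) (dAt h1y q hq)]
      simp [pdx]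
    have e2 : pdy u q = pdy (pdx w₀) q + pdy (pdx w₁) q + pdy (pdy w₂) q := by
      rw [hu']
      show fderiv ℝ (fun r => pdx w₀ r + pdx w₁ r + pdy w₂ r) q (0, 1) = _
      rw [fderiv_fun_add ((dAt h0x q hq).fun_add (dAt h1x q hq)) (dAt h2y q hq),
        fderiv_fun_add (dAt h0x q hq) (dAt h1x q hq)]
      simp [pdy]
    have c₀ : pdx (pdy w₀) q = pdy (pdx w₀) q :=
      pdx_pdy_comm (((hw₀ q hq).contDiffAt (hΩ.mem_nhds hq)).of_le (by norm_num))
    have c₁ : pdx (pdy w₁) q = pdy (pdx w₁) q :=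
      pdx_pdy_comm (((hw₁ q hq).contDiffAt (hΩ.mem_nhds hq)).of_le (by norm_num))
    have hφ := hφ0 q hq
    simp only [lap] at hφ
    linarith [e1, e2, c₀, c₁]
  intro p hp
  have du := dAt hu2 p hp
  have dv := dAt hv2 p hp
  have dux := dAt hux p hp
  have duy := dAt huy p hp
  have dvx := dAt hvx p hp
  have dvy := dAt hvy p hp
  have b1 : pdy h₁ p = u p * pdy (pdx u) p + pdx u p * pdy u p
      + (v p * pdy (pdy u) p + pdy u p * pdy v p) := by
    rw [hh₁']
    show fderiv ℝ (fun q => u q * pdx u q + v q * pdy u q) p (0, 1) = _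
    rw [fderiv_fun_add (du.fun_mul dux) (dv.fun_mul duy), fderiv_fun_mul du dux, fderiv_fun_mul dv duy]
    simp [pdy]
  have b2 : pdx h₂ p = u p * pdx (pdx v) p + pdx v p * pdx u p
      + (v p * pdx (pdy v) p + pdy v p * pdx v p) := by
    rw [hh₂']
    show fderiv ℝ (fun q => u q * pdx v q + v q * pdy v q) p (1, 0) = _
    rw [fderiv_fun_add (du.fun_mul dvx) (dv.fun_mul dvy), fderiv_fun_mul du dvx, fderiv_fun_mul dv dvy]
    simp [pdx]
  have hE : fderiv ℝ (pdx v) p = fderiv ℝ (pdy u) p :=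
    (Filter.eventuallyEq_of_mem (hΩ.mem_nhds hp) hA).fderiv_eq
  have r0 : pdx v p = pdy u p := hA p hp
  have r1 : pdx (pdx v) p = pdy (pdx u) p := by
    have : pdx (pdx v) p = pdx (pdy u) p := by
      simp only [pdx]; rw [hE]
    rw [this, pdx_pdy_comm (cAt hu2 p hp)]
  have r2 : pdx (pdy v) p = pdy (pdy u) p := by
    rw [pdx_pdy_comm (cAt hv2 p hp)]
    show fderiv ℝ (pdx v) p (0, 1) = _
    rw [hE]; rfl
  rw [b1, b2, r0, r1, r2]
  ring
end

section
/- Let Ω ⊆ ℝ² be open, let ν ∈ ℝ, let f : Ω → ℝ be of class C², and let w₀, w₁, w₂ : Ω → ℝ be functions of class C⁴ on Ω satisfying ∇²w₂ + 2∂ₓᵧw₁ = 0 and ∇²w₀ + ∂ₓₓw₁ − ∂ᵧᵧw₁ = 0 on Ω. Define u = ∂ₓw₀ + ∂ₓw₁ + ∂ᵧw₂ and v = ∂ᵧw₀ − ∂ᵧw₁ − ∂ₓw₂. Then ∂ₓu + ∂ᵧv = 0 on Ω, and the curl compatibility condition ∂ᵧ(ν∇²u − u ∂ₓu − v ∂ᵧu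 + ∂ₓf) = ∂ₓ(ν∇²v − u ∂ₓv − v ∂ᵧv + ∂ᵧf) holds on Ω. -/
noncomputable def pd (a : ℝ × ℝ) (w : ℝ × ℝ → ℝ) : ℝ × ℝ → ℝ := fun p => fderiv ℝ w p a

def dX : ℝ × ℝ := (1, 0)
def dY : ℝ × ℝ := (0, 1)

lemma pdx_eq (w : ℝ × ℝ → ℝ) : pdx w = pd dX w := rfl
lemma pdy_eq (w : ℝ × ℝ → ℝ) : pdy w = pd dY w := rfl
lemma lap_apply (w : ℝ × ℝ → ℝ) (p : ℝ × ℝ) :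
    lap w p = pd dX (pd dX w) p + pd dY (pd dY w) p := rfl

lemma pd_contDiffAt {n m : WithTop ℕ∞} {w : ℝ × ℝ → ℝ} {p : ℝ × ℝ}
    (hw : ContDiffAt ℝ m w p) (h : n + 1 ≤ m) (a : ℝ × ℝ) :
    ContDiffAt ℝ n (pd a w) p :=
  (ContinuousLinearMap.apply ℝ ℝ a).contDiff.contDiffAt.comp p (hw.fderiv_right h)

lemma pd_diffAt {w : ℝ × ℝ → ℝ} {p : ℝ × ℝ} (hw : ContDiffAt ℝ 2 w p) (a : ℝ × ℝ) :
    DifferentiableAt ℝ (pd a w) p :=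
  (pd_contDiffAt (n := 1) hw (by norm_num) a).differentiableAt (by norm_num)

lemma pd_add (a : ℝ × ℝ) {g h : ℝ × ℝ → ℝ} {p : ℝ × ℝ}
    (hg : DifferentiableAt ℝ g p) (hh : DifferentiableAt ℝ h p) :
    pd a (fun q => g q + h q) p = pd a g p + pd a h p := by
  simp [pd, fderiv_fun_add hg hh]

lemma pd_sub (a : ℝ × ℝ) {g h : ℝ × ℝ → ℝ} {p : ℝ × ℝ}
    (hg : DifferentiableAt ℝ g p) (hh : DifferentiableAt ℝ h p) :
    pd a (fun q => g q - h q) p = pd a g p - pd a h p := by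
  simp [pd, fderiv_fun_sub hg hh]

lemma pd_const_mul (a : ℝ × ℝ) (c : ℝ) {g : ℝ × ℝ → ℝ} {p : ℝ × ℝ}
    (hg : DifferentiableAt ℝ g p) :
    pd a (fun q => c * g q) p = c * pd a g p := by
  simp [pd, fderiv_const_mul hg c]

lemma pd_mul (a : ℝ × ℝ) {g h : ℝ × ℝ → ℝ} {p : ℝ × ℝ}
    (hg : DifferentiableAt ℝ g p) (hh : DifferentiableAt ℝ h p) :
    pd a (fun q => g q * h q) p = pd a g p * h p + g p * pd a h p := by
  simp [pd, fderiv_fun_mul hg hh]; ring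

lemma pd_congr {Ω : Set (ℝ × ℝ)} (hΩ : IsOpen Ω) {g h : ℝ × ℝ → ℝ} {p : ℝ × ℝ}
    (hp : p ∈ Ω) (he : ∀ q ∈ Ω, g q = h q) (a : ℝ × ℝ) :
    pd a g p = pd a h p := by
  have : g =ᶠ[nhds p] h := Filter.eventuallyEq_of_mem (hΩ.mem_nhds hp) he
  simp [pd, this.fderiv_eq]

lemma pd_comm {w : ℝ × ℝ → ℝ} {p : ℝ × ℝ} (hw : ContDiffAt ℝ 2 w p) (a b : ℝ × ℝ) :
    pd a (pd b w) p = pd b (pd a w) p := by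
  have hd : DifferentiableAt ℝ (fderiv ℝ w) p :=
    (hw.fderiv_right (m := 1) (by norm_num)).differentiableAt (by norm_num)
  have key : ∀ c d : ℝ × ℝ, pd c (pd d w) p = fderiv ℝ (fderiv ℝ w) p c d := by
    intro c d
    have := fderiv_clm_apply hd (differentiableAt_const d)
    show fderiv ℝ (fun y => (fderiv ℝ w y) d) p c = _
    rw [this]
    simp
  rw [key a b, key b a, hw.isSymmSndFDerivAt (by simp)]

lemma pd_expand (a : ℝ × ℝ) (c : ℝ) {g h u U v V F : ℝ × ℝ → ℝ} {p : ℝ × ℝ}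
    (dg : DifferentiableAt ℝ g p) (dh : DifferentiableAt ℝ h p)
    (du : DifferentiableAt ℝ u p) (dU : DifferentiableAt ℝ U p)
    (dv : DifferentiableAt ℝ v p) (dV : DifferentiableAt ℝ V p)
    (dF : DifferentiableAt ℝ F p) :
    pd a (fun q => c * (g q + h q) - u q * U q - v q * V q + F q) p
      = c * (pd a g p + pd a h p)
        - (pd a u p * U p + u p * pd a U p)
        - (pd a v p * V p + v p * pd a V p) + pd a F p := by
  have d1 : DifferentiableAt ℝ (fun q => c * (g q + h q)) p := (dg.add dh).const_mul c
  have d2 : DifferentiableAt ℝ (fun q => u q * U q) p := du.mul dU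
  have d3 : DifferentiableAt ℝ (fun q => v q * V q) p := dv.mul dV
  rw [pd_add a (g := fun q => c * (g q + h q) - u q * U q - v q * V q) ((d1.sub d2).sub d3) dF,
      pd_sub a (g := fun q => c * (g q + h q) - u q * U q) (d1.sub d2) d3, pd_sub a d1 d2,
      pd_const_mul a c (g := fun q => g q + h q) (dg.add dh), pd_add a dg dh, pd_mul a du dU, pd_mul a dv dV]

theorem incompressibility_and_curl_compatibility
    (Ω : Set (ℝ × ℝ)) (hΩ : IsOpen Ω) (ν : ℝ)
    (f : ℝ × ℝ → ℝ) (hf : ContDiffOn ℝ 2 f Ω)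
    (w₀ w₁ w₂ : ℝ × ℝ → ℝ)
    (hw₀ : ContDiffOn ℝ 4 w₀ Ω) (hw₁ : ContDiffOn ℝ 4 w₁ Ω) (hw₂ : ContDiffOn ℝ 4 w₂ Ω)
    (hφ0 : ∀ p ∈ Ω, lap w₂ p + 2 * pdx (pdy w₁) p = 0)
    (hw0eq : ∀ p ∈ Ω, lap w₀ p + pdx (pdx w₁) p - pdy (pdy w₁) p = 0)
    (u v : ℝ × ℝ → ℝ)
    (hu : ∀ p, u p = pdx w₀ p + pdx w₁ p + pdy w₂ p)
    (hv : ∀ p, v p = pdy w₀ p - pdy w₁ p - pdx w₂ p) :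
    (∀ p ∈ Ω, pdx u p + pdy v p = 0) ∧
    (∀ p ∈ Ω,
      pdy (fun q => ν * lap u q - u q * pdx u q - v q * pdy u q + pdx f q) p =
      pdx (fun q => ν * lap v q - u q * pdx v q - v q * pdy v q + pdy f q) p) := by
  simp only [pdx_eq, pdy_eq, lap_apply] at *
  have hU : u = fun p => pd dX w₀ p + pd dX w₁ p + pd dY w₂ p := funext hu
  have hV : v = fun p => pd dY w₀ p - pd dY w₁ p - pd dX w₂ p := funext hv
  -- basic regularity
  have cw : ∀ w : ℝ × ℝ → ℝ, ContDiffOn ℝ 4 w Ω → ∀ q ∈ Ω, ContDiffAt ℝ 4 w q :=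
    fun w hw q hq => hw.contDiffAt (hΩ.mem_nhds hq)
  have cw0 := cw w₀ hw₀; have cw1 := cw w₁ hw₁; have cw2 := cw w₂ hw₂
  have cf : ∀ q ∈ Ω, ContDiffAt ℝ 2 f q := fun q hq => hf.contDiffAt (hΩ.mem_nhds hq)
  have cpd : ∀ w : ℝ × ℝ → ℝ, (∀ q ∈ Ω, ContDiffAt ℝ 4 w q) → ∀ (a : ℝ × ℝ), ∀ q ∈ Ω,
      ContDiffAt ℝ 3 (pd a w) q :=
    fun w hw a q hq => pd_contDiffAt (hw q hq) (by norm_num) a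
  have cu : ∀ q ∈ Ω, ContDiffAt ℝ 3 u q := by
    intro q hq; rw [hU]
    exact ((cpd w₀ cw0 dX q hq).add (cpd w₁ cw1 dX q hq)).add (cpd w₂ cw2 dY q hq)
  have cv : ∀ q ∈ Ω, ContDiffAt ℝ 3 v q := by
    intro q hq; rw [hV]
    exact ((cpd w₀ cw0 dY q hq).sub (cpd w₁ cw1 dY q hq)).sub (cpd w₂ cw2 dX q hq)
  -- differentiability of pd of the wᵢ (they are C³, hence C²)
  have dw : ∀ w : ℝ × ℝ → ℝ, (∀ q ∈ Ω, ContDiffAt ℝ 4 w q) → ∀ (a : ℝ × ℝ), ∀ q ∈ Ω,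
      DifferentiableAt ℝ (pd a w) q :=
    fun w hw a q hq => pd_diffAt ((hw q hq).of_le (by norm_num)) a
  -- Stage 2 : divergence-free
  have hdiv : ∀ q ∈ Ω, pd dX u q + pd dY v q = 0 := by
    intro q hq
    have eu : pd dX u q = pd dX (pd dX w₀) q + pd dX (pd dX w₁) q + pd dX (pd dY w₂) q := by
      rw [hU]
      rw [pd_add dX (g := fun p => pd dX w₀ p + pd dX w₁ p) ((dw w₀ cw0 dX q hq).add (dw w₁ cw1 dX q hq)) (dw w₂ cw2 dY q hq),
          pd_add dX (dw w₀ cw0 dX q hq) (dw w₁ cw1 dX q hq)]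
    have ev : pd dY v q = pd dY (pd dY w₀) q - pd dY (pd dY w₁) q - pd dY (pd dX w₂) q := by
      rw [hV]
      rw [pd_sub dY (g := fun p => pd dY w₀ p - pd dY w₁ p) ((dw w₀ cw0 dY q hq).sub (dw w₁ cw1 dY q hq)) (dw w₂ cw2 dX q hq),
          pd_sub dY (dw w₀ cw0 dY q hq) (dw w₁ cw1 dY q hq)]
    have hcomm2 : pd dX (pd dY w₂) q = pd dY (pd dX w₂) q :=
      pd_comm ((cw2 q hq).of_le (by norm_num)) dX dY
    have h0 := hw0eq q hq
    rw [eu, ev]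
    linarith
  -- Stage 3 : irrotational
  have hω : ∀ q ∈ Ω, pd dX v q = pd dY u q := by
    intro q hq
    have ev : pd dX v q = pd dX (pd dY w₀) q - pd dX (pd dY w₁) q - pd dX (pd dX w₂) q := by
      rw [hV]
      rw [pd_sub dX (g := fun p => pd dY w₀ p - pd dY w₁ p) ((dw w₀ cw0 dY q hq).sub (dw w₁ cw1 dY q hq)) (dw w₂ cw2 dX q hq),
          pd_sub dX (dw w₀ cw0 dY q hq) (dw w₁ cw1 dY q hq)]
    have eu : pd dY u q = pd dY (pd dX w₀) q + pd dY (pd dX w₁) q + pd dY (pd dY w₂) q := by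
      rw [hU]
      rw [pd_add dY (g := fun p => pd dX w₀ p + pd dX w₁ p) ((dw w₀ cw0 dX q hq).add (dw w₁ cw1 dX q hq)) (dw w₂ cw2 dY q hq),
          pd_add dY (dw w₀ cw0 dX q hq) (dw w₁ cw1 dX q hq)]
    have h0 := hφ0 q hq
    have hc0 : pd dX (pd dY w₀) q = pd dY (pd dX w₀) q :=
      pd_comm ((cw0 q hq).of_le (by norm_num)) dX dY
    have hc1 : pd dX (pd dY w₁) q = pd dY (pd dX w₁) q :=
      pd_comm ((cw1 q hq).of_le (by norm_num)) dX dY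
    rw [ev, eu]
    linarith
  refine ⟨hdiv, ?_⟩
  intro p hp
  -- second-derivative regularity of u, v
  have cu2 : ∀ (a : ℝ × ℝ), ∀ q ∈ Ω, ContDiffAt ℝ 2 (pd a u) q :=
    fun a q hq => pd_contDiffAt (cu q hq) (by norm_num) a
  have cv2 : ∀ (a : ℝ × ℝ), ∀ q ∈ Ω, ContDiffAt ℝ 2 (pd a v) q :=
    fun a q hq => pd_contDiffAt (cv q hq) (by norm_num) a
  -- the two key pointwise identities on Ω
  have hA : ∀ q ∈ Ω, pd dX (pd dX v) q = pd dY (pd dX u) q := by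
    intro q hq
    rw [pd_congr hΩ hq hω dX]
    exact pd_comm ((cu q hq).of_le (by norm_num)) dX dY
  have hB : ∀ q ∈ Ω, pd dX (pd dY v) q = pd dY (pd dY u) q := by
    intro q hq
    rw [pd_comm ((cv q hq).of_le (by norm_num)) dX dY]
    exact pd_congr hΩ hq hω dY
  -- differentiability at p of all pieces
  have du1 : ∀ a : ℝ × ℝ, DifferentiableAt ℝ (pd a u) p :=
    fun a => (cu2 a p hp).differentiableAt (by norm_num)
  have dv1 : ∀ a : ℝ × ℝ, DifferentiableAt ℝ (pd a v) p :=
    fun a => (cv2 a p hp).differentiableAt (by norm_num)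
  have du2 : ∀ a b : ℝ × ℝ, DifferentiableAt ℝ (pd a (pd b u)) p :=
    fun a b => pd_diffAt (cu2 b p hp) a
  have dv2 : ∀ a b : ℝ × ℝ, DifferentiableAt ℝ (pd a (pd b v)) p :=
    fun a b => pd_diffAt (cv2 b p hp) a
  have du0 : DifferentiableAt ℝ u p := (cu p hp).differentiableAt (by norm_num)
  have dv0 : DifferentiableAt ℝ v p := (cv p hp).differentiableAt (by norm_num)
  have df1 : ∀ a : ℝ × ℝ, DifferentiableAt ℝ (pd a f) p := fun a => pd_diffAt (cf p hp) a
  rw [pd_expand dY ν (du2 dX dX) (du2 dY dY) du0 (du1 dX) dv0 (du1 dY) (df1 dX),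
      pd_expand dX ν (dv2 dX dX) (dv2 dY dY) du0 (dv1 dX) dv0 (dv1 dY) (df1 dY)]
  -- rewrite the RHS third derivatives of v into derivatives of u
  have K1 : pd dX (pd dX (pd dX v)) p = pd dY (pd dX (pd dX u)) p := by
    rw [pd_congr hΩ hp hA dX]
    exact pd_comm (cu2 dX p hp) dX dY
  have K2 : pd dX (pd dY (pd dY v)) p = pd dY (pd dY (pd dY u)) p := by
    rw [pd_comm (cv2 dY p hp) dX dY]
    exact pd_congr hΩ hp hB dY
  have K3 := hA p hp
  have K4 := hB p hp
  have K5 : pd dX (pd dY f) p = pd dY (pd dX f) p := pd_comm (cf p hp) dX dY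
  have K6 := hω p hp
  rw [K1, K2, K3, K4, K5, K6]
  ring
end

section
/- Let Ω ⊆ ℝ² be open and convex, let ν ∈ ℝ, let f : Ω → ℝ be of class C², and let w₀, w₁, w₂ : Ω → ℝ be functions of class C⁴ on Ω satisfying ∇²w₂ + 2∂ₓᵧw₁ = 0 and ∇²w₀ + ∂ₓₓw₁ − ∂ᵧᵧw₁ = 0 on Ω. Define u = ∂ₓw₀ + ∂ₓw₁ + ∂ᵧw₂ and v = ∂ᵧw₀ − ∂ᵧw₁ − ∂ₓw₂. Then there exists a differentiable function P : Ω → ℝ such that on Ω: ν∇²u − u ∂ₓu − v ∂ᵧu − ∂ₓP + ∂ₓf = 0, ν∇²v − u ∂ₓv − v ∂ᵧv − ∂ᵧP + ∂ᵧf = 0, and ∂ₓu + ∂ᵧv = 0; that is, (u, v, P) solves the time-independent incompressible Navier–Stokes system with external force (∂ₓf, ∂ᵧf). -/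
private lemma pdx_contDiffOn' {Ω : Set (ℝ×ℝ)} (hΩ : IsOpen Ω) {w : ℝ×ℝ→ℝ} {m n : WithTop ℕ∞}
    (h : ContDiffOn ℝ n w Ω) (hmn : m + 1 ≤ n) : ContDiffOn ℝ m (pdx w) Ω :=
  (h.fderiv_of_isOpen hΩ hmn).clm_apply contDiffOn_const

private lemma pdy_contDiffOn' {Ω : Set (ℝ×ℝ)} (hΩ : IsOpen Ω) {w : ℝ×ℝ→ℝ} {m n : WithTop ℕ∞}
    (h : ContDiffOn ℝ n w Ω) (hmn : m + 1 ≤ n) : ContDiffOn ℝ m (pdy w) Ω :=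
  (h.fderiv_of_isOpen hΩ hmn).clm_apply contDiffOn_const

private lemma diffAt_of_cdo {Ω : Set (ℝ×ℝ)} (hΩ : IsOpen Ω) {w : ℝ×ℝ→ℝ} {n : WithTop ℕ∞}
    (h : ContDiffOn ℝ n w Ω) (hn : 1 ≤ n) {p} (hp : p ∈ Ω) : DifferentiableAt ℝ w p :=
  ((h.contDiffAt (hΩ.mem_nhds hp)).of_le hn).differentiableAt one_ne_zero

private lemma fderiv_eval2 {w : ℝ×ℝ→ℝ} {p : ℝ×ℝ} (h : DifferentiableAt ℝ (fderiv ℝ w) p)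
    (a b : ℝ×ℝ) : fderiv ℝ (fun q => fderiv ℝ w q b) p a = fderiv ℝ (fderiv ℝ w) p a b := by
  have h2 := ((ContinuousLinearMap.apply ℝ ℝ b).hasFDerivAt.comp p h.hasFDerivAt).fderiv
  calc fderiv ℝ (fun q => fderiv ℝ w q b) p a
      = fderiv ℝ ((ContinuousLinearMap.apply ℝ ℝ b) ∘ (fderiv ℝ w)) p a := rfl
    _ = _ := by rw [h2]; rfl

private lemma pdx_pdy_symm {Ω : Set (ℝ×ℝ)} (hΩ : IsOpen Ω) {w : ℝ×ℝ→ℝ} {n : WithTop ℕ∞}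
    (hw : ContDiffOn ℝ n w Ω) (hn : 2 ≤ n) {p} (hp : p ∈ Ω) :
    pdx (pdy w) p = pdy (pdx w) p := by
  have hc : ContDiffAt ℝ 2 w p := (hw.contDiffAt (hΩ.mem_nhds hp)).of_le hn
  have hd : DifferentiableAt ℝ (fderiv ℝ w) p :=
    (hc.fderiv_right (m := 1) (by norm_num)).differentiableAt one_ne_zero
  have hs := hc.isSymmSndFDerivAt minSmoothness_of_isRCLikeNormedField.le
  show fderiv ℝ (fun q => fderiv ℝ w q (0,1)) p (1,0)
      = fderiv ℝ (fun q => fderiv ℝ w q (1,0)) p (0,1)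
  rw [fderiv_eval2 hd, fderiv_eval2 hd, hs (1,0) (0,1)]

private lemma fderiv_add_apply' {a b : ℝ×ℝ→ℝ} {p e : ℝ×ℝ} (ha : DifferentiableAt ℝ a p)
    (hb : DifferentiableAt ℝ b p) :
    fderiv ℝ (fun q => a q + b q) p e = fderiv ℝ a p e + fderiv ℝ b p e := by
  rw [fderiv_fun_add ha hb]; rfl

private lemma fderiv_sub_apply' {a b : ℝ×ℝ→ℝ} {p e : ℝ×ℝ} (ha : DifferentiableAt ℝ a p)
    (hb : DifferentiableAt ℝ b p) :
    fderiv ℝ (fun q => a q - b q) p e = fderiv ℝ a p e - fderiv ℝ b p e := by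
  rw [fderiv_fun_sub ha hb]; rfl

theorem exists_pressure_solving_navier_stokes
    (Ω : Set (ℝ × ℝ)) (hΩ : IsOpen Ω) (hconv : Convex ℝ Ω) (ν : ℝ)
    (f : ℝ × ℝ → ℝ) (hf : ContDiffOn ℝ 2 f Ω)
    (w₀ w₁ w₂ : ℝ × ℝ → ℝ)
    (hw₀ : ContDiffOn ℝ 4 w₀ Ω) (hw₁ : ContDiffOn ℝ 4 w₁ Ω) (hw₂ : ContDiffOn ℝ 4 w₂ Ω)
    (hφ0 : ∀ p ∈ Ω, lap w₂ p + 2 * pdx (pdy w₁) p = 0)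
    (hw0eq : ∀ p ∈ Ω, lap w₀ p + pdx (pdx w₁) p - pdy (pdy w₁) p = 0)
    (u v : ℝ × ℝ → ℝ)
    (hu : ∀ p, u p = pdx w₀ p + pdx w₁ p + pdy w₂ p)
    (hv : ∀ p, v p = pdy w₀ p - pdy w₁ p - pdx w₂ p) :
    ∃ P : ℝ × ℝ → ℝ, DifferentiableOn ℝ P Ω ∧
      (∀ p ∈ Ω, ν * lap u p - u p * pdx u p - v p * pdy u p - pdx P p + pdx f p = 0) ∧
      (∀ p ∈ Ω, ν * lap v p - u p * pdx v p - v p * pdy v p - pdy P p + pdy f p = 0) ∧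
      (∀ p ∈ Ω, pdx u p + pdy v p = 0) := by
  have hu' : u = fun q => pdx w₀ q + pdx w₁ q + pdy w₂ q := funext hu
  have hv' : v = fun q => pdy w₀ q - pdy w₁ q - pdx w₂ q := funext hv
  -- C³ smoothness of first partials of the stream functions
  have h34 : (3 : WithTop ℕ∞) + 1 ≤ 4 := by norm_num
  have hx₀ : ContDiffOn ℝ 3 (pdx w₀) Ω := pdx_contDiffOn' hΩ hw₀ h34
  have hx₁ : ContDiffOn ℝ 3 (pdx w₁) Ω := pdx_contDiffOn' hΩ hw₁ h34
  have hx₂ : ContDiffOn ℝ 3 (pdx w₂) Ω := pdx_contDiffOn' hΩ hw₂ h34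
  have hy₀ : ContDiffOn ℝ 3 (pdy w₀) Ω := pdy_contDiffOn' hΩ hw₀ h34
  have hy₁ : ContDiffOn ℝ 3 (pdy w₁) Ω := pdy_contDiffOn' hΩ hw₁ h34
  have hy₂ : ContDiffOn ℝ 3 (pdy w₂) Ω := pdy_contDiffOn' hΩ hw₂ h34
  have hu3 : ContDiffOn ℝ 3 u Ω := by rw [hu']; exact (hx₀.add hx₁).add hy₂
  have hv3 : ContDiffOn ℝ 3 v Ω := by rw [hv']; exact (hy₀.sub hy₁).sub hx₂
  have h23 : (2 : WithTop ℕ∞) + 1 ≤ 3 := by norm_num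
  have hux : ContDiffOn ℝ 2 (pdx u) Ω := pdx_contDiffOn' hΩ hu3 h23
  have huy : ContDiffOn ℝ 2 (pdy u) Ω := pdy_contDiffOn' hΩ hu3 h23
  have hvx : ContDiffOn ℝ 2 (pdx v) Ω := pdx_contDiffOn' hΩ hv3 h23
  have hvy : ContDiffOn ℝ 2 (pdy v) Ω := pdy_contDiffOn' hΩ hv3 h23
  have h13 : (1 : WithTop ℕ∞) ≤ 3 := by norm_num
  have h12 : (1 : WithTop ℕ∞) ≤ 2 := by norm_num
  have d3 : ∀ {g : ℝ×ℝ→ℝ}, ContDiffOn ℝ 3 g Ω → ∀ {p}, p ∈ Ω → DifferentiableAt ℝ g p :=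
    fun {g} hg {p} hp => diffAt_of_cdo hΩ hg h13 hp
  have d2 : ∀ {g : ℝ×ℝ→ℝ}, ContDiffOn ℝ 2 g Ω → ∀ {p}, p ∈ Ω → DifferentiableAt ℝ g p :=
    fun {g} hg {p} hp => diffAt_of_cdo hΩ hg h12 hp
  -- expansion of derivatives of u and v
  have hue : ∀ p ∈ Ω, ∀ e, fderiv ℝ u p e
      = fderiv ℝ (pdx w₀) p e + fderiv ℝ (pdx w₁) p e + fderiv ℝ (pdy w₂) p e := by
    intro p hp e
    rw [hu', fderiv_add_apply' (a := fun q => pdx w₀ q + pdx w₁ q) ((d3 hx₀ hp).add (d3 hx₁ hp)) (d3 hy₂ hp),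
      fderiv_add_apply' (d3 hx₀ hp) (d3 hx₁ hp)]
  have hve : ∀ p ∈ Ω, ∀ e, fderiv ℝ v p e
      = fderiv ℝ (pdy w₀) p e - fderiv ℝ (pdy w₁) p e - fderiv ℝ (pdx w₂) p e := by
    intro p hp e
    rw [hv', fderiv_sub_apply' (a := fun q => pdy w₀ q - pdy w₁ q) ((d3 hy₀ hp).sub (d3 hy₁ hp)) (d3 hx₂ hp),
      fderiv_sub_apply' (d3 hy₀ hp) (d3 hy₁ hp)]
  have h24 : (2 : WithTop ℕ∞) ≤ 4 := by norm_num
  have h23' : (2 : WithTop ℕ∞) ≤ 3 := by norm_num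
  -- divergence free
  have hdiv : ∀ p ∈ Ω, pdx u p + pdy v p = 0 := by
    intro p hp
    have e1 : pdx u p = pdx (pdx w₀) p + pdx (pdx w₁) p + pdx (pdy w₂) p := hue p hp (1,0)
    have e2 : pdy v p = pdy (pdy w₀) p - pdy (pdy w₁) p - pdy (pdx w₂) p := hve p hp (0,1)
    have s2 : pdx (pdy w₂) p = pdy (pdx w₂) p := pdx_pdy_symm hΩ hw₂ h24 hp
    have h0 := hw0eq p hp
    simp only [lap] at h0
    rw [e1, e2, s2]; linarith
  -- curl free
  have hcurl : ∀ p ∈ Ω, pdy u p = pdx v p := by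
    intro p hp
    have e1 : pdy u p = pdy (pdx w₀) p + pdy (pdx w₁) p + pdy (pdy w₂) p := hue p hp (0,1)
    have e2 : pdx v p = pdx (pdy w₀) p - pdx (pdy w₁) p - pdx (pdx w₂) p := hve p hp (1,0)
    have s0 : pdx (pdy w₀) p = pdy (pdx w₀) p := pdx_pdy_symm hΩ hw₀ h24 hp
    have s1 : pdx (pdy w₁) p = pdy (pdx w₁) p := pdx_pdy_symm hΩ hw₁ h24 hp
    have h0 := hφ0 p hp
    simp only [lap] at h0
    rw [e1, e2, s0]; linarith
  -- derivatives of the divergence and curl identities vanish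
  have hkey1 : ∀ p ∈ Ω, ∀ e, fderiv ℝ (pdx u) p e + fderiv ℝ (pdy v) p e = 0 := by
    intro p hp e
    have h1 : (fun q => pdx u q + pdy v q) =ᶠ[nhds p] (fun _ => (0:ℝ)) :=
      Filter.eventuallyEq_of_mem (hΩ.mem_nhds hp) hdiv
    have h2 : fderiv ℝ (pdx u) p + fderiv ℝ (pdy v) p = 0 := by
      have h3 := h1.fderiv_eq (𝕜 := ℝ)
      rw [fderiv_fun_add (d2 hux hp) (d2 hvy hp)] at h3
      simpa using h3
    calc fderiv ℝ (pdx u) p e + fderiv ℝ (pdy v) p e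
        = (fderiv ℝ (pdx u) p + fderiv ℝ (pdy v) p) e := rfl
      _ = (0 : (ℝ×ℝ) →L[ℝ] ℝ) e := by rw [h2]
      _ = 0 := rfl
  have hkey2 : ∀ p ∈ Ω, ∀ e, fderiv ℝ (pdy u) p e - fderiv ℝ (pdx v) p e = 0 := by
    intro p hp e
    have h1 : (fun q => pdy u q - pdx v q) =ᶠ[nhds p] (fun _ => (0:ℝ)) :=
      Filter.eventuallyEq_of_mem (hΩ.mem_nhds hp) (fun q hq => by rw [hcurl q hq, sub_self])
    have h2 : fderiv ℝ (pdy u) p - fderiv ℝ (pdx v) p = 0 := by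
      have h3 := h1.fderiv_eq (𝕜 := ℝ)
      rw [fderiv_fun_sub (d2 huy hp) (d2 hvx hp)] at h3
      simpa using h3
    calc fderiv ℝ (pdy u) p e - fderiv ℝ (pdx v) p e
        = (fderiv ℝ (pdy u) p - fderiv ℝ (pdx v) p) e := rfl
      _ = (0 : (ℝ×ℝ) →L[ℝ] ℝ) e := by rw [h2]
      _ = 0 := rfl
  -- u and v are harmonic
  have hlapu : ∀ p ∈ Ω, lap u p = 0 := by
    intro p hp
    have sv : pdx (pdy v) p = pdy (pdx v) p := pdx_pdy_symm hΩ hv3 h23' hp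
    have k1 := hkey1 p hp (1,0)
    have k2 := hkey2 p hp (0,1)
    simp only [lap]
    show fderiv ℝ (pdx u) p (1,0) + fderiv ℝ (pdy u) p (0,1) = 0
    have sv' : fderiv ℝ (pdy v) p (1,0) = fderiv ℝ (pdx v) p (0,1) := sv
    linarith
  have hlapv : ∀ p ∈ Ω, lap v p = 0 := by
    intro p hp
    have su : pdx (pdy u) p = pdy (pdx u) p := pdx_pdy_symm hΩ hu3 h23' hp
    have k1 := hkey1 p hp (0,1)
    have k2 := hkey2 p hp (1,0)
    simp only [lap]
    show fderiv ℝ (pdx v) p (1,0) + fderiv ℝ (pdy v) p (0,1) = 0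
    have su' : fderiv ℝ (pdy u) p (1,0) = fderiv ℝ (pdx u) p (0,1) := su
    linarith
  -- the pressure
  refine ⟨fun q => f q - (u q * u q + v q * v q) * (1/2), ?_, ?_, ?_, hdiv⟩
  · have hud := hu3.differentiableOn (by norm_num)
    have hvd := hv3.differentiableOn (by norm_num)
    have hsum : DifferentiableOn ℝ (fun q => u q * u q + v q * v q) Ω :=
      (hud.mul hud).add (hvd.mul hvd)
    exact (hf.differentiableOn (by norm_num)).sub (hsum.mul_const _)
  all_goals {
    intro p hp
    have hfa : DifferentiableAt ℝ f p := d2 hf hp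
    have hua : DifferentiableAt ℝ u p := d3 hu3 hp
    have hva : DifferentiableAt ℝ v p := d3 hv3 hp
    have h1 := (hua.hasFDerivAt.mul hua.hasFDerivAt).add (hva.hasFDerivAt.mul hva.hasFDerivAt)
    have h2 : fderiv ℝ (fun q => f q - (u q * u q + v q * v q) * (1/2)) p = _ := (hfa.hasFDerivAt.sub (h1.mul_const (1/2))).fderiv
    have hP : ∀ e, fderiv ℝ (fun q => f q - (u q * u q + v q * v q) * (1/2)) p e
        = fderiv ℝ f p e - (u p * fderiv ℝ u p e + v p * fderiv ℝ v p e) := by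
      intro e
      rw [h2]
      simp only [ContinuousLinearMap.coe_sub', Pi.sub_apply, ContinuousLinearMap.coe_smul',
        Pi.smul_apply, ContinuousLinearMap.add_apply, ContinuousLinearMap.coe_comp',
        Function.comp_apply, smul_eq_mul]
      simp [ContinuousLinearMap.smul_apply]
      ring
    first
    | { -- x equation
        have hPx : pdx (fun q => f q - (u q * u q + v q * v q) * (1/2)) p
            = pdx f p - (u p * pdx u p + v p * pdx v p) := hP (1,0)
        have hc : pdy u p = pdx v p := hcurl p hp
        rw [hlapu p hp, hPx, hc]; ring }
    | { -- y equation
        have hPy : pdy (fun q => f q - (u q * u q + v q * v q) * (1/2)) p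
            = pdy f p - (u p * pdy u p + v p * pdy v p) := hP (0,1)
        have hc : pdy u p = pdx v p := hcurl p hp
        rw [hlapv p hp, hPy, ← hc]; ring }
  }
end

section
/- Let Ω ⊆ ℝ² be open and let w₀, w₁ : Ω → ℝ be functions of class C⁴ on Ω satisfying ∂ₓᵧw₁ = 0 and ∇²w₀ + ∂ₓₓw₁ − ∂ᵧᵧw₁ = 0 on Ω. Define u = ∂ₓw₀ + ∂ₓw₁ and v = ∂ᵧw₀ − ∂ᵧw₁. Then ∂ₓu + ∂ᵧv = 0 on Ω, and for every ν ∈ ℝ and every f : Ω → ℝ of class C², the curl compatibility condition ∂ᵧ(ν∇²u − u ∂ₓu − v ∂ᵧu + ∂ₓf) = ∂ₓ(ν∇²v − u ∂ₓv − v ∂ᵧv + ∂ᵧf) holds on Ω. -/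
section aux

variable {f g : ℝ × ℝ → ℝ} {p : ℝ × ℝ}

lemma pdE_congr (h : f =ᶠ[nhds p] g) (e : ℝ × ℝ) :
    fderiv ℝ f p e = fderiv ℝ g p e := by rw [h.fderiv_eq]

lemma contDiffAt_pdE {n m : WithTop ℕ∞} (h : ContDiffAt ℝ n f p) (hmn : m + 1 ≤ n) (e : ℝ × ℝ) :
    ContDiffAt ℝ m (fun q => fderiv ℝ f q e) p :=
  (h.fderiv_right hmn).clm_apply contDiffAt_const

lemma pdE_add (hf : DifferentiableAt ℝ f p) (hg : DifferentiableAt ℝ g p) (e : ℝ × ℝ) :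
    fderiv ℝ (fun q => f q + g q) p e = fderiv ℝ f p e + fderiv ℝ g p e := by
  rw [fderiv_fun_add hf hg]; simp

lemma pdE_sub (hf : DifferentiableAt ℝ f p) (hg : DifferentiableAt ℝ g p) (e : ℝ × ℝ) :
    fderiv ℝ (fun q => f q - g q) p e = fderiv ℝ f p e - fderiv ℝ g p e := by
  rw [fderiv_fun_sub hf hg]; simp

lemma pdE_neg (hf : DifferentiableAt ℝ f p) (e : ℝ × ℝ) :
    fderiv ℝ (fun q => -f q) p e = -fderiv ℝ f p e := by
  rw [fderiv_fun_neg]; simp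

lemma pdE_comm (h : ContDiffAt ℝ 2 f p) (a b : ℝ × ℝ) :
    fderiv ℝ (fun q => fderiv ℝ f q a) p b = fderiv ℝ (fun q => fderiv ℝ f q b) p a := by
  have hd : DifferentiableAt ℝ (fderiv ℝ f) p :=
    (h.fderiv_right (by norm_num : (1 : WithTop ℕ∞) + 1 ≤ 2)).differentiableAt one_ne_zero
  have key : ∀ c : ℝ × ℝ, ∀ e : ℝ × ℝ,
      fderiv ℝ (fun q => fderiv ℝ f q c) p e = fderiv ℝ (fderiv ℝ f) p e c := by
    intro c e
    have h2 : fderiv ℝ (fun q => (fderiv ℝ f q) ((fun _ => c) q)) p =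
        (fderiv ℝ f p).comp (fderiv ℝ (fun _ : ℝ × ℝ => c) p) +
          (fderiv ℝ (fderiv ℝ f) p).flip c :=
      fderiv_clm_apply hd (differentiableAt_const c)
    simp only [fderiv_const, Pi.zero_apply, ContinuousLinearMap.comp_zero, zero_add] at h2
    rw [h2]; simp
  rw [key a b, key b a]
  exact h.isSymmSndFDerivAt minSmoothness_of_isRCLikeNormedField.le b a

lemma pd_expand_s7 {u v a b c : ℝ × ℝ → ℝ} {p : ℝ × ℝ}
    (hu : DifferentiableAt ℝ u p) (hv : DifferentiableAt ℝ v p)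
    (ha : DifferentiableAt ℝ a p) (hb : DifferentiableAt ℝ b p)
    (hc : DifferentiableAt ℝ c p) (e : ℝ × ℝ) :
    fderiv ℝ (fun q => -(u q * a q) - v q * b q + c q) p e =
      -(fderiv ℝ u p e * a p + u p * fderiv ℝ a p e)
        - (fderiv ℝ v p e * b p + v p * fderiv ℝ b p e) + fderiv ℝ c p e := by
  have H : HasFDerivAt (fun q => -(u q * a q) - v q * b q + c q)
      ((-(u p • fderiv ℝ a p + a p • fderiv ℝ u p)
        - (v p • fderiv ℝ b p + b p • fderiv ℝ v p)) + fderiv ℝ c p) p :=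
    (((hu.hasFDerivAt.mul ha.hasFDerivAt).neg.sub
      (hv.hasFDerivAt.mul hb.hasFDerivAt)).add hc.hasFDerivAt)
  rw [H.fderiv]
  simp only [ContinuousLinearMap.add_apply, ContinuousLinearMap.sub_apply,
    ContinuousLinearMap.neg_apply, ContinuousLinearMap.smul_apply, smul_eq_mul]
  ring

end aux

theorem special_case_w2_zero
    (Ω : Set (ℝ × ℝ)) (hΩ : IsOpen Ω)
    (w₀ w₁ : ℝ × ℝ → ℝ)
    (hw₀ : ContDiffOn ℝ 4 w₀ Ω) (hw₁ : ContDiffOn ℝ 4 w₁ Ω)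
    (hmix : ∀ p ∈ Ω, pdx (pdy w₁) p = 0)
    (hw0eq : ∀ p ∈ Ω, lap w₀ p + pdx (pdx w₁) p - pdy (pdy w₁) p = 0)
    (u v : ℝ × ℝ → ℝ)
    (hu : ∀ p, u p = pdx w₀ p + pdx w₁ p)
    (hv : ∀ p, v p = pdy w₀ p - pdy w₁ p) :
    (∀ p ∈ Ω, pdx u p + pdy v p = 0) ∧
    (∀ (ν : ℝ) (f : ℝ × ℝ → ℝ), ContDiffOn ℝ 2 f Ω →
      ∀ p ∈ Ω,
        pdy (fun q => ν * lap u q - u q * pdx u q - v q * pdy u q + pdx f q) p =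
        pdx (fun q => ν * lap v q - u q * pdx v q - v q * pdy v q + pdy f q) p) := by
  have hΩn : ∀ q ∈ Ω, Ω ∈ nhds q := fun q hq => hΩ.mem_nhds hq
  have hufun : u = fun q => fderiv ℝ w₀ q (1, 0) + fderiv ℝ w₁ q (1, 0) := funext hu
  have hvfun : v = fun q => fderiv ℝ w₀ q (0, 1) - fderiv ℝ w₁ q (0, 1) := funext hv
  -- differentiability of first partials of w₀, w₁
  have dW : ∀ (w : ℝ × ℝ → ℝ), ContDiffOn ℝ 4 w Ω → ∀ q ∈ Ω, ∀ e : ℝ × ℝ,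
      DifferentiableAt ℝ (fun r => fderiv ℝ w r e) q := fun w hw q hq e =>
    (contDiffAt_pdE (hw.contDiffAt (hΩn q hq))
      (by norm_num : (1 : WithTop ℕ∞) + 1 ≤ 4) e).differentiableAt one_ne_zero
  have cu : ∀ q ∈ Ω, ContDiffAt ℝ 3 u q := by
    intro q hq
    rw [hufun]
    exact (contDiffAt_pdE (hw₀.contDiffAt (hΩn q hq))
        (by norm_num : (3 : WithTop ℕ∞) + 1 ≤ 4) _).add
      (contDiffAt_pdE (hw₁.contDiffAt (hΩn q hq)) (by norm_num) _)
  have cv : ∀ q ∈ Ω, ContDiffAt ℝ 3 v q := by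
    intro q hq
    rw [hvfun]
    exact (contDiffAt_pdE (hw₀.contDiffAt (hΩn q hq))
        (by norm_num : (3 : WithTop ℕ∞) + 1 ≤ 4) _).sub
      (contDiffAt_pdE (hw₁.contDiffAt (hΩn q hq)) (by norm_num) _)
  -- divergence free
  have F1 : ∀ q ∈ Ω, fderiv ℝ u q (1, 0) + fderiv ℝ v q (0, 1) = 0 := by
    intro q hq
    have h1 : fderiv ℝ u q (1, 0) =
        fderiv ℝ (fun r => fderiv ℝ w₀ r (1, 0)) q (1, 0)
          + fderiv ℝ (fun r => fderiv ℝ w₁ r (1, 0)) q (1, 0) := by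
      rw [hufun]; exact pdE_add (dW w₀ hw₀ q hq _) (dW w₁ hw₁ q hq _) _
    have h2 : fderiv ℝ v q (0, 1) =
        fderiv ℝ (fun r => fderiv ℝ w₀ r (0, 1)) q (0, 1)
          - fderiv ℝ (fun r => fderiv ℝ w₁ r (0, 1)) q (0, 1) := by
      rw [hvfun]; exact pdE_sub (dW w₀ hw₀ q hq _) (dW w₁ hw₁ q hq _) _
    have h0 : fderiv ℝ (fun r => fderiv ℝ w₀ r (1, 0)) q (1, 0)
        + fderiv ℝ (fun r => fderiv ℝ w₀ r (0, 1)) q (0, 1)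
        + fderiv ℝ (fun r => fderiv ℝ w₁ r (1, 0)) q (1, 0)
        - fderiv ℝ (fun r => fderiv ℝ w₁ r (0, 1)) q (0, 1) = 0 := hw0eq q hq
    rw [h1, h2]; linarith
  -- curl free
  have F2 : ∀ q ∈ Ω, fderiv ℝ u q (0, 1) = fderiv ℝ v q (1, 0) := by
    intro q hq
    have c₀ : ContDiffAt ℝ 2 w₀ q := (hw₀.contDiffAt (hΩn q hq)).of_le (by norm_num)
    have c₁ : ContDiffAt ℝ 2 w₁ q := (hw₁.contDiffAt (hΩn q hq)).of_le (by norm_num)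
    have hm : fderiv ℝ (fun r => fderiv ℝ w₁ r (0, 1)) q (1, 0) = 0 := hmix q hq
    have h1 : fderiv ℝ u q (0, 1) =
        fderiv ℝ (fun r => fderiv ℝ w₀ r (1, 0)) q (0, 1)
          + fderiv ℝ (fun r => fderiv ℝ w₁ r (1, 0)) q (0, 1) := by
      rw [hufun]; exact pdE_add (dW w₀ hw₀ q hq _) (dW w₁ hw₁ q hq _) _
    have h2 : fderiv ℝ v q (1, 0) =
        fderiv ℝ (fun r => fderiv ℝ w₀ r (0, 1)) q (1, 0)
          - fderiv ℝ (fun r => fderiv ℝ w₁ r (0, 1)) q (1, 0) := by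
      rw [hvfun]; exact pdE_sub (dW w₀ hw₀ q hq _) (dW w₁ hw₁ q hq _) _
    rw [h1, h2, pdE_comm c₀ (1, 0) (0, 1), pdE_comm c₁ (1, 0) (0, 1), hm]
    ring
  -- eventual versions
  have e1 : ∀ q ∈ Ω, (fun r => fderiv ℝ u r (1, 0)) =ᶠ[nhds q]
      (fun r => -fderiv ℝ v r (0, 1)) := by
    intro q hq
    filter_upwards [hΩn q hq] with r hr
    have := F1 r hr; linarith
  have e1' : ∀ q ∈ Ω, (fun r => fderiv ℝ v r (0, 1)) =ᶠ[nhds q]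
      (fun r => -fderiv ℝ u r (1, 0)) := by
    intro q hq
    filter_upwards [hΩn q hq] with r hr
    have := F1 r hr; linarith
  have e2 : ∀ q ∈ Ω, (fun r => fderiv ℝ u r (0, 1)) =ᶠ[nhds q]
      (fun r => fderiv ℝ v r (1, 0)) := by
    intro q hq
    filter_upwards [hΩn q hq] with r hr using F2 r hr
  -- harmonicity
  have F3 : ∀ q ∈ Ω, lap u q = 0 := by
    intro q hq
    have c2v : ContDiffAt ℝ 2 v q := (cv q hq).of_le (by norm_num)
    have dvy : DifferentiableAt ℝ (fun r => fderiv ℝ v r (0, 1)) q :=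
      (contDiffAt_pdE (cv q hq) (by norm_num : (1 : WithTop ℕ∞) + 1 ≤ 3)
        _).differentiableAt one_ne_zero
    have a1 : fderiv ℝ (fun r => fderiv ℝ u r (1, 0)) q (1, 0) =
        fderiv ℝ (fun r => -fderiv ℝ v r (0, 1)) q (1, 0) := pdE_congr (e1 q hq) _
    have a2 := pdE_neg dvy ((1, 0) : ℝ × ℝ)
    have a3 : fderiv ℝ (fun r => fderiv ℝ u r (0, 1)) q (0, 1) =
        fderiv ℝ (fun r => fderiv ℝ v r (1, 0)) q (0, 1) := pdE_congr (e2 q hq) _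
    have a4 := pdE_comm c2v ((1, 0) : ℝ × ℝ) ((0, 1) : ℝ × ℝ)
    show fderiv ℝ (fun r => fderiv ℝ u r (1, 0)) q (1, 0)
        + fderiv ℝ (fun r => fderiv ℝ u r (0, 1)) q (0, 1) = 0
    linarith
  have F4 : ∀ q ∈ Ω, lap v q = 0 := by
    intro q hq
    have c2u : ContDiffAt ℝ 2 u q := (cu q hq).of_le (by norm_num)
    have dux : DifferentiableAt ℝ (fun r => fderiv ℝ u r (1, 0)) q :=
      (contDiffAt_pdE (cu q hq) (by norm_num : (1 : WithTop ℕ∞) + 1 ≤ 3)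
        _).differentiableAt one_ne_zero
    have b1 : fderiv ℝ (fun r => fderiv ℝ v r (1, 0)) q (1, 0) =
        fderiv ℝ (fun r => fderiv ℝ u r (0, 1)) q (1, 0) := pdE_congr (e2 q hq).symm _
    have b2 := pdE_comm c2u ((0, 1) : ℝ × ℝ) ((1, 0) : ℝ × ℝ)
    have b3 : fderiv ℝ (fun r => fderiv ℝ v r (0, 1)) q (0, 1) =
        fderiv ℝ (fun r => -fderiv ℝ u r (1, 0)) q (0, 1) := pdE_congr (e1' q hq) _
    have b4 := pdE_neg dux ((0, 1) : ℝ × ℝ)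
    show fderiv ℝ (fun r => fderiv ℝ v r (1, 0)) q (1, 0)
        + fderiv ℝ (fun r => fderiv ℝ v r (0, 1)) q (0, 1) = 0
    linarith
  refine ⟨F1, ?_⟩
  intro ν f hf p hp
  have cf : ContDiffAt ℝ 2 f p := hf.contDiffAt (hΩn p hp)
  have eA : (fun q => ν * lap u q - u q * pdx u q - v q * pdy u q + pdx f q) =ᶠ[nhds p]
      (fun q => -(u q * pdx u q) - v q * pdy u q + pdx f q) := by
    filter_upwards [hΩn p hp] with q hq
    rw [F3 q hq]; ring
  have eB : (fun q => ν * lap v q - u q * pdx v q - v q * pdy v q + pdy f q) =ᶠ[nhds p]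
      (fun q => -(u q * pdx v q) - v q * pdy v q + pdy f q) := by
    filter_upwards [hΩn p hp] with q hq
    rw [F4 q hq]; ring
  have hL := pdE_congr eA ((0, 1) : ℝ × ℝ)
  have hR := pdE_congr eB ((1, 0) : ℝ × ℝ)
  show fderiv ℝ (fun q => ν * lap u q - u q * pdx u q - v q * pdy u q + pdx f q) p (0, 1) =
    fderiv ℝ (fun q => ν * lap v q - u q * pdx v q - v q * pdy v q + pdy f q) p (1, 0)
  rw [hL, hR]
  have du := (cu p hp).differentiableAt (by norm_num)
  have dv := (cv p hp).differentiableAt (by norm_num)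
  have dux : DifferentiableAt ℝ (pdx u) p :=
    (contDiffAt_pdE (cu p hp) (by norm_num : (1 : WithTop ℕ∞) + 1 ≤ 3)
      ((1, 0) : ℝ × ℝ)).differentiableAt one_ne_zero
  have duy : DifferentiableAt ℝ (pdy u) p :=
    (contDiffAt_pdE (cu p hp) (by norm_num : (1 : WithTop ℕ∞) + 1 ≤ 3)
      ((0, 1) : ℝ × ℝ)).differentiableAt one_ne_zero
  have dvx : DifferentiableAt ℝ (pdx v) p :=
    (contDiffAt_pdE (cv p hp) (by norm_num : (1 : WithTop ℕ∞) + 1 ≤ 3)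
      ((1, 0) : ℝ × ℝ)).differentiableAt one_ne_zero
  have dvy : DifferentiableAt ℝ (pdy v) p :=
    (contDiffAt_pdE (cv p hp) (by norm_num : (1 : WithTop ℕ∞) + 1 ≤ 3)
      ((0, 1) : ℝ × ℝ)).differentiableAt one_ne_zero
  have dfx : DifferentiableAt ℝ (pdx f) p :=
    (contDiffAt_pdE cf (by norm_num : (1 : WithTop ℕ∞) + 1 ≤ 2)
      ((1, 0) : ℝ × ℝ)).differentiableAt one_ne_zero
  have dfy : DifferentiableAt ℝ (pdy f) p :=
    (contDiffAt_pdE cf (by norm_num : (1 : WithTop ℕ∞) + 1 ≤ 2)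
      ((0, 1) : ℝ × ℝ)).differentiableAt one_ne_zero
  rw [pd_expand_s7 du dv dux duy dfx ((0, 1) : ℝ × ℝ),
      pd_expand_s7 du dv dvx dvy dfy ((1, 0) : ℝ × ℝ)]
  have c2u : ContDiffAt ℝ 2 u p := (cu p hp).of_le (by norm_num)
  have c2v : ContDiffAt ℝ 2 v p := (cv p hp).of_le (by norm_num)
  have hF2p := F2 p hp
  have k1 : pdx u p = fderiv ℝ u p (1, 0) := rfl
  have k2 : pdy u p = fderiv ℝ u p (0, 1) := rfl
  have k3 : pdx v p = fderiv ℝ v p (1, 0) := rfl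
  have k4 : pdy v p = fderiv ℝ v p (0, 1) := rfl
  have hxy : fderiv ℝ (pdx u) p (0, 1) = fderiv ℝ (pdx v) p (1, 0) := by
    show fderiv ℝ (fun r => fderiv ℝ u r (1, 0)) p (0, 1) =
      fderiv ℝ (fun r => fderiv ℝ v r (1, 0)) p (1, 0)
    rw [pdE_comm c2u (1, 0) (0, 1)]
    exact pdE_congr (e2 p hp) _
  have hyy : fderiv ℝ (pdy u) p (0, 1) = fderiv ℝ (pdy v) p (1, 0) := by
    show fderiv ℝ (fun r => fderiv ℝ u r (0, 1)) p (0, 1) =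
      fderiv ℝ (fun r => fderiv ℝ v r (0, 1)) p (1, 0)
    rw [pdE_congr (e2 p hp) ((0, 1) : ℝ × ℝ)]
    exact pdE_comm c2v (1, 0) (0, 1)
  have hff : fderiv ℝ (pdx f) p (0, 1) = fderiv ℝ (pdy f) p (1, 0) :=
    pdE_comm cf (1, 0) (0, 1)
  rw [k1, k2, k3, k4, hF2p, hxy, hyy, hff]
  ring
end

section
/- Let r : ℝ → ℝ be a positive function of class C², let f₁(θ) = −r′(θ)/r(θ), f₀(θ) = 1 + f₁(θ)², f₂(θ) = 1 + f₁′(θ)/(1 + f₁(θ)²), f₃(θ) = 2f₁(θ)/(1 + f₁(θ)²), f₄(θ) = 1/(1 + f₁(θ)²), and let Φ : (0,∞) × ℝ → ℝ² be the map Φ(t,θ) = (t·r(θ)·cos θ, t·r(θ)·sin θ). Let u : ℝ² → ℝ be of class C² and set ũ = u ∘ Φ. Then for all (t,θ) with t > 0: (∇²u)(Φ(t,θ)) · r(θ)²/f₀(θ) = ∂ₜₜũ(t,θ) + (f₂(θ)/t)·∂ₜũ(t,θ) + (f₃(θ)/t)·∂_θ∂ₜũ(t,θ) + (f₄(θ)/t²)·∂_θθũ(t,θ).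 -/
/-- The polar-type parametrization Φ(t,θ) = (t·r(θ)·cos θ, t·r(θ)·sin θ). -/
noncomputable def Phi (r : ℝ → ℝ) : ℝ × ℝ → ℝ × ℝ :=
  fun p => (p.1 * r p.2 * Real.cos p.2, p.1 * r p.2 * Real.sin p.2)

noncomputable def f1 (r : ℝ → ℝ) : ℝ → ℝ := fun θ => -deriv r θ / r θ

noncomputable def f0 (r : ℝ → ℝ) : ℝ → ℝ := fun θ => 1 + (f1 r θ) ^ 2

noncomputable def f2 (r : ℝ → ℝ) : ℝ → ℝ := fun θ => 1 + deriv (f1 r) θ / (1 + (f1 r θ) ^ 2)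

noncomputable def f3 (r : ℝ → ℝ) : ℝ → ℝ := fun θ => 2 * f1 r θ / (1 + (f1 r θ) ^ 2)

noncomputable def f4 (r : ℝ → ℝ) : ℝ → ℝ := fun θ => 1 / (1 + (f1 r θ) ^ 2)

open Real ContinuousLinearMap

lemma pdx_eq_s12 {w : ℝ×ℝ→ℝ} {L : ℝ×ℝ →L[ℝ] ℝ} {p : ℝ×ℝ} (h : HasFDerivAt w L p) :
    pdx w p = L (1,0) := by simp [pdx, h.fderiv]

lemma pdy_eq_s12 {w : ℝ×ℝ→ℝ} {L : ℝ×ℝ →L[ℝ] ℝ} {p : ℝ×ℝ} (h : HasFDerivAt w L p) :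
    pdy w p = L (0,1) := by simp [pdy, h.fderiv]

lemma phi_deriv {r : ℝ → ℝ} (hr : Differentiable ℝ r) (p : ℝ×ℝ) :
    ∃ L : ℝ×ℝ →L[ℝ] ℝ×ℝ, HasFDerivAt (Phi r) L p ∧
      L (1,0) = (r p.2 * Real.cos p.2, r p.2 * Real.sin p.2) ∧
      L (0,1) = (p.1 * (deriv r p.2 * Real.cos p.2 - r p.2 * Real.sin p.2),
                 p.1 * (deriv r p.2 * Real.sin p.2 + r p.2 * Real.cos p.2)) := by
  have hrs : HasFDerivAt (fun q : ℝ×ℝ => r q.2) (deriv r p.2 • snd ℝ ℝ ℝ) p :=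
    (hr p.2).hasDerivAt.comp_hasFDerivAt p hasFDerivAt_snd
  have h1 : HasFDerivAt (fun q : ℝ×ℝ => q.1 * r q.2)
      ((p.1 : ℝ) • (deriv r p.2 • snd ℝ ℝ ℝ) + r p.2 • fst ℝ ℝ ℝ) p :=
    hasFDerivAt_fst.mul hrs
  have hcos : HasFDerivAt (fun q : ℝ×ℝ => Real.cos q.2) ((-Real.sin p.2) • snd ℝ ℝ ℝ) p :=
    (Real.hasDerivAt_cos p.2).comp_hasFDerivAt p hasFDerivAt_snd
  have hsin : HasFDerivAt (fun q : ℝ×ℝ => Real.sin q.2) ((Real.cos p.2) • snd ℝ ℝ ℝ) p :=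
    (Real.hasDerivAt_sin p.2).comp_hasFDerivAt p hasFDerivAt_snd
  refine ⟨_, ((h1.mul hcos).prodMk (h1.mul hsin)), ?_, ?_⟩ <;>
    · simp [Prod.ext_iff]
      constructor <;> ring

lemma phi_diff {r : ℝ → ℝ} (hr : Differentiable ℝ r) : Differentiable ℝ (Phi r) :=
  fun p => ((phi_deriv hr p).choose_spec.1).differentiableAt

lemma chain_pdx {r : ℝ → ℝ} (hr : Differentiable ℝ r) {w : ℝ×ℝ→ℝ} (p : ℝ×ℝ)
    (hw : DifferentiableAt ℝ w (Phi r p)) :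
    pdx (fun q => w (Phi r q)) p =
      (r p.2 * Real.cos p.2) * pdx w (Phi r p) + (r p.2 * Real.sin p.2) * pdy w (Phi r p) := by
  obtain ⟨L, hL, h10, h01⟩ := phi_deriv hr p
  have hc : HasFDerivAt (fun q => w (Phi r q)) ((fderiv ℝ w (Phi r p)).comp L) p :=
    hw.hasFDerivAt.comp p hL
  rw [pdx_eq_s12 hc]
  have : (L (1,0)) = (r p.2 * Real.cos p.2) • ((1:ℝ),(0:ℝ))
      + (r p.2 * Real.sin p.2) • ((0:ℝ),(1:ℝ)) := by
    rw [h10]; simp [Prod.ext_iff]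
  simp only [ContinuousLinearMap.comp_apply, this, map_add, map_smul, smul_eq_mul]
  rfl

lemma chain_pdy {r : ℝ → ℝ} (hr : Differentiable ℝ r) {w : ℝ×ℝ→ℝ} (p : ℝ×ℝ)
    (hw : DifferentiableAt ℝ w (Phi r p)) :
    pdy (fun q => w (Phi r q)) p =
      (p.1 * (deriv r p.2 * Real.cos p.2 - r p.2 * Real.sin p.2)) * pdx w (Phi r p)
      + (p.1 * (deriv r p.2 * Real.sin p.2 + r p.2 * Real.cos p.2)) * pdy w (Phi r p) := by
  obtain ⟨L, hL, h10, h01⟩ := phi_deriv hr p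
  have hc : HasFDerivAt (fun q => w (Phi r q)) ((fderiv ℝ w (Phi r p)).comp L) p :=
    hw.hasFDerivAt.comp p hL
  rw [pdy_eq_s12 hc]
  have : (L (0,1)) = (p.1 * (deriv r p.2 * Real.cos p.2 - r p.2 * Real.sin p.2)) • ((1:ℝ),(0:ℝ))
      + (p.1 * (deriv r p.2 * Real.sin p.2 + r p.2 * Real.cos p.2)) • ((0:ℝ),(1:ℝ)) := by
    rw [h01]; simp [Prod.ext_iff]
  simp only [ContinuousLinearMap.comp_apply, this, map_add, map_smul, smul_eq_mul]
  rfl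

lemma pdx_add {f g : ℝ×ℝ→ℝ} {p : ℝ×ℝ} (hf : DifferentiableAt ℝ f p)
    (hg : DifferentiableAt ℝ g p) :
    pdx (fun q => f q + g q) p = pdx f p + pdx g p := by
  simp [pdx, fderiv_fun_add hf hg]

lemma pdy_add {f g : ℝ×ℝ→ℝ} {p : ℝ×ℝ} (hf : DifferentiableAt ℝ f p)
    (hg : DifferentiableAt ℝ g p) :
    pdy (fun q => f q + g q) p = pdy f p + pdy g p := by
  simp [pdy, fderiv_fun_add hf hg]

lemma pdx_mul {f g : ℝ×ℝ→ℝ} {p : ℝ×ℝ} (hf : DifferentiableAt ℝ f p)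
    (hg : DifferentiableAt ℝ g p) :
    pdx (fun q => f q * g q) p = f p * pdx g p + g p * pdx f p := by
  simp [pdx, fderiv_fun_mul hf hg]

lemma pdy_mul {f g : ℝ×ℝ→ℝ} {p : ℝ×ℝ} (hf : DifferentiableAt ℝ f p)
    (hg : DifferentiableAt ℝ g p) :
    pdy (fun q => f q * g q) p = f p * pdy g p + g p * pdy f p := by
  simp [pdy, fderiv_fun_mul hf hg]

lemma pdx_snd_comp {A : ℝ → ℝ} {p : ℝ×ℝ} (hA : DifferentiableAt ℝ A p.2) :
    pdx (fun q => A q.2) p = 0 := by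
  rw [show (fun q : ℝ×ℝ => A q.2) = A ∘ Prod.snd from rfl,
    pdx_eq_s12 (hA.hasDerivAt.comp_hasFDerivAt p hasFDerivAt_snd)]; simp

lemma pdy_snd_comp {A : ℝ → ℝ} {A' : ℝ} {p : ℝ×ℝ} (hA : HasDerivAt A A' p.2) :
    pdy (fun q => A q.2) p = A' := by
  rw [show (fun q : ℝ×ℝ => A q.2) = A ∘ Prod.snd from rfl,
    pdy_eq_s12 (hA.comp_hasFDerivAt p hasFDerivAt_snd)]; simp

lemma pdx_fst {p : ℝ×ℝ} : pdx (fun q : ℝ×ℝ => q.1) p = 1 := by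
  rw [pdx_eq_s12 (hasFDerivAt_fst (p := p))]; rfl

lemma pdy_fst {p : ℝ×ℝ} : pdy (fun q : ℝ×ℝ => q.1) p = 0 := by
  rw [pdy_eq_s12 (hasFDerivAt_fst (p := p))]; rfl

theorem laplacian_in_polar_coordinates
    (r : ℝ → ℝ) (hr_pos : ∀ θ, 0 < r θ) (hr : ContDiff ℝ 2 r)
    (u : ℝ × ℝ → ℝ) (hu : ContDiff ℝ 2 u) :
    ∀ t θ : ℝ, 0 < t →
      lap u (Phi r (t, θ)) * ((r θ) ^ 2 / f0 r θ) =
        pdx (pdx (u ∘ Phi r)) (t, θ)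
        + (f2 r θ / t) * pdx (u ∘ Phi r) (t, θ)
        + (f3 r θ / t) * pdy (pdx (u ∘ Phi r)) (t, θ)
        + (f4 r θ / t ^ 2) * pdy (pdy (u ∘ Phi r)) (t, θ) := by
  intro t θ ht
  have hrd : Differentiable ℝ r := hr.differentiable (by norm_num)
  have hr' : ContDiff ℝ (1+1) r := by exact_mod_cast hr
  have hdr1 : ContDiff ℝ 1 (deriv r) := (contDiff_succ_iff_deriv.mp hr').2.2
  have hdrd : Differentiable ℝ (deriv r) := hdr1.differentiable one_ne_zero
  have hud : Differentiable ℝ u := hu.differentiable (by norm_num)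
  have hux : ContDiff ℝ 1 (pdx u) :=
    (ContinuousLinearMap.apply ℝ ℝ ((1:ℝ),(0:ℝ))).contDiff.comp
      (hu.fderiv_right (by norm_num))
  have huy : ContDiff ℝ 1 (pdy u) :=
    (ContinuousLinearMap.apply ℝ ℝ ((0:ℝ),(1:ℝ))).contDiff.comp
      (hu.fderiv_right (by norm_num))
  have huxd : Differentiable ℝ (pdx u) := hux.differentiable one_ne_zero
  have huyd : Differentiable ℝ (pdy u) := huy.differentiable one_ne_zero
  have hphid : Differentiable ℝ (Phi r) := phi_diff hrd
  set q : ℝ × ℝ := Phi r (t, θ) with hq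
  -- symmetry of second derivatives
  have hfd : Differentiable ℝ (fderiv ℝ u) :=
    (hu.fderiv_right (m := 1) (by norm_num)).differentiable one_ne_zero
  have key : ∀ (v w : ℝ×ℝ), fderiv ℝ (fun p => fderiv ℝ u p v) q w
      = fderiv ℝ (fderiv ℝ u) q w v := by
    intro v w
    rw [show (fun p => fderiv ℝ u p v) = (ContinuousLinearMap.apply ℝ ℝ v) ∘ (fderiv ℝ u)
      from rfl,
      fderiv_comp q (ContinuousLinearMap.apply ℝ ℝ v).differentiableAt (hfd q)]
    simp
  have hsym : pdx (pdy u) q = pdy (pdx u) q := by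
    show fderiv ℝ (fun p => fderiv ℝ u p (0,1)) q (1,0)
      = fderiv ℝ (fun p => fderiv ℝ u p (1,0)) q (0,1)
    rw [key, key]
    exact (hu.contDiffAt.isSymmSndFDerivAt (by simp)) (1,0) (0,1)
  -- first derivatives of the composition
  have e1 : pdx (u ∘ Phi r) = fun p =>
      (r p.2 * Real.cos p.2) * pdx u (Phi r p) + (r p.2 * Real.sin p.2) * pdy u (Phi r p) :=
    funext fun p => chain_pdx hrd p (hud _)
  have e2 : pdy (u ∘ Phi r) = fun p =>
      (p.1 * (deriv r p.2 * Real.cos p.2 - r p.2 * Real.sin p.2)) * pdx u (Phi r p)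
      + (p.1 * (deriv r p.2 * Real.sin p.2 + r p.2 * Real.cos p.2)) * pdy u (Phi r p) :=
    funext fun p => chain_pdy hrd p (hud _)
  -- differentiability of building blocks
  have hA : DifferentiableAt ℝ (fun p : ℝ×ℝ => r p.2 * Real.cos p.2) (t,θ) := by
    have := (((hrd θ).fun_mul (Real.differentiable_cos θ)).comp (t,θ) (differentiableAt_snd : DifferentiableAt ℝ (Prod.snd : ℝ×ℝ → ℝ) (t,θ))); exact this
  have hB : DifferentiableAt ℝ (fun p : ℝ×ℝ => r p.2 * Real.sin p.2) (t,θ) := by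
    have := (((hrd θ).fun_mul (Real.differentiable_sin θ)).comp (t,θ) (differentiableAt_snd : DifferentiableAt ℝ (Prod.snd : ℝ×ℝ → ℝ) (t,θ))); exact this
  have hP : DifferentiableAt ℝ
      (fun p : ℝ×ℝ => deriv r p.2 * Real.cos p.2 - r p.2 * Real.sin p.2) (t,θ) := by
    have := ((((hdrd θ).fun_mul (Real.differentiable_cos θ)).fun_sub
      ((hrd θ).fun_mul (Real.differentiable_sin θ))).comp (t,θ) (differentiableAt_snd : DifferentiableAt ℝ (Prod.snd : ℝ×ℝ → ℝ) (t,θ))); exact this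
  have hQ : DifferentiableAt ℝ
      (fun p : ℝ×ℝ => deriv r p.2 * Real.sin p.2 + r p.2 * Real.cos p.2) (t,θ) := by
    have := ((((hdrd θ).fun_mul (Real.differentiable_sin θ)).fun_add
      ((hrd θ).fun_mul (Real.differentiable_cos θ))).comp (t,θ) (differentiableAt_snd : DifferentiableAt ℝ (Prod.snd : ℝ×ℝ → ℝ) (t,θ))); exact this
  have hX : DifferentiableAt ℝ
      (fun p : ℝ×ℝ => p.1 * (deriv r p.2 * Real.cos p.2 - r p.2 * Real.sin p.2)) (t,θ) :=
    differentiableAt_fst.mul hP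
  have hY : DifferentiableAt ℝ
      (fun p : ℝ×ℝ => p.1 * (deriv r p.2 * Real.sin p.2 + r p.2 * Real.cos p.2)) (t,θ) :=
    differentiableAt_fst.mul hQ
  have hgx : DifferentiableAt ℝ (fun p => pdx u (Phi r p)) (t,θ) :=
    (huxd _).comp (t,θ) (hphid _)
  have hgy : DifferentiableAt ℝ (fun p => pdy u (Phi r p)) (t,θ) :=
    (huyd _).comp (t,θ) (hphid _)
  -- one-dimensional derivative facts
  have hdA : HasDerivAt (fun θ => r θ * Real.cos θ)
      (deriv r θ * Real.cos θ + r θ * (-Real.sin θ)) θ :=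
    (hrd θ).hasDerivAt.mul (Real.hasDerivAt_cos θ)
  have hdB : HasDerivAt (fun θ => r θ * Real.sin θ)
      (deriv r θ * Real.sin θ + r θ * Real.cos θ) θ :=
    (hrd θ).hasDerivAt.mul (Real.hasDerivAt_sin θ)
  have hdP : HasDerivAt (fun θ => deriv r θ * Real.cos θ - r θ * Real.sin θ)
      ((deriv (deriv r) θ * Real.cos θ + deriv r θ * (-Real.sin θ))
        - (deriv r θ * Real.sin θ + r θ * Real.cos θ)) θ :=
    ((hdrd θ).hasDerivAt.mul (Real.hasDerivAt_cos θ)).sub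
      ((hrd θ).hasDerivAt.mul (Real.hasDerivAt_sin θ))
  have hdQ : HasDerivAt (fun θ => deriv r θ * Real.sin θ + r θ * Real.cos θ)
      ((deriv (deriv r) θ * Real.sin θ + deriv r θ * Real.cos θ)
        + (deriv r θ * Real.cos θ + r θ * (-Real.sin θ))) θ :=
    ((hdrd θ).hasDerivAt.mul (Real.hasDerivAt_sin θ)).add
      ((hrd θ).hasDerivAt.mul (Real.hasDerivAt_cos θ))
  -- value of deriv (f1 r)
  have hf1d : deriv (f1 r) θ =
      (-deriv (deriv r) θ * r θ - -deriv r θ * deriv r θ) / r θ ^ 2 := by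
    have : HasDerivAt (f1 r)
        ((-deriv (deriv r) θ * r θ - -deriv r θ * deriv r θ) / r θ ^ 2) θ :=
      (hdrd θ).hasDerivAt.neg.div (hrd θ).hasDerivAt (hr_pos θ).ne'
    exact this.deriv
  -- second derivatives of the composition
  have E1 : pdx (pdx (u ∘ Phi r)) (t,θ) =
      (r θ * Real.cos θ) * ((r θ * Real.cos θ) * pdx (pdx u) q + (r θ * Real.sin θ) * pdy (pdx u) q)
      + (r θ * Real.sin θ) * ((r θ * Real.cos θ) * pdx (pdy u) q + (r θ * Real.sin θ) * pdy (pdy u) q) := by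
    rw [e1, pdx_add (hA.fun_mul hgx) (hB.fun_mul hgy), pdx_mul hA hgx, pdx_mul hB hgy,
      pdx_snd_comp (p := (t,θ)) (((hrd θ).fun_mul (Real.differentiable_cos θ)) : DifferentiableAt ℝ (fun θ => r θ * Real.cos θ) θ),
      pdx_snd_comp (p := (t,θ)) (((hrd θ).fun_mul (Real.differentiable_sin θ)) : DifferentiableAt ℝ (fun θ => r θ * Real.sin θ) θ),
      chain_pdx hrd (t,θ) (huxd _), chain_pdx hrd (t,θ) (huyd _)]
    ring
  have E0 : pdx (u ∘ Phi r) (t,θ) =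
      (r θ * Real.cos θ) * pdx u q + (r θ * Real.sin θ) * pdy u q := by
    rw [e1]
  have E2 : pdy (pdx (u ∘ Phi r)) (t,θ) =
      (r θ * Real.cos θ) * ((t * (deriv r θ * Real.cos θ - r θ * Real.sin θ)) * pdx (pdx u) q
        + (t * (deriv r θ * Real.sin θ + r θ * Real.cos θ)) * pdy (pdx u) q)
      + pdx u q * (deriv r θ * Real.cos θ + r θ * (-Real.sin θ))
      + ((r θ * Real.sin θ) * ((t * (deriv r θ * Real.cos θ - r θ * Real.sin θ)) * pdx (pdy u) q
        + (t * (deriv r θ * Real.sin θ + r θ * Real.cos θ)) * pdy (pdy u) q)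
      + pdy u q * (deriv r θ * Real.sin θ + r θ * Real.cos θ)) := by
    rw [e1, pdy_add (hA.fun_mul hgx) (hB.fun_mul hgy), pdy_mul hA hgx, pdy_mul hB hgy,
      pdy_snd_comp (p := (t,θ)) hdA, pdy_snd_comp (p := (t,θ)) hdB,
      chain_pdy hrd (t,θ) (huxd _), chain_pdy hrd (t,θ) (huyd _)]
  have E3 : pdy (pdy (u ∘ Phi r)) (t,θ) =
      (t * (deriv r θ * Real.cos θ - r θ * Real.sin θ))
        * ((t * (deriv r θ * Real.cos θ - r θ * Real.sin θ)) * pdx (pdx u) q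
          + (t * (deriv r θ * Real.sin θ + r θ * Real.cos θ)) * pdy (pdx u) q)
      + pdx u q * (t * ((deriv (deriv r) θ * Real.cos θ + deriv r θ * (-Real.sin θ))
          - (deriv r θ * Real.sin θ + r θ * Real.cos θ)))
      + ((t * (deriv r θ * Real.sin θ + r θ * Real.cos θ))
        * ((t * (deriv r θ * Real.cos θ - r θ * Real.sin θ)) * pdx (pdy u) q
          + (t * (deriv r θ * Real.sin θ + r θ * Real.cos θ)) * pdy (pdy u) q)
      + pdy u q * (t * ((deriv (deriv r) θ * Real.sin θ + deriv r θ * Real.cos θ)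
          + (deriv r θ * Real.cos θ + r θ * (-Real.sin θ))))) := by
    rw [e2, pdy_add (hX.fun_mul hgx) (hY.fun_mul hgy), pdy_mul hX hgx, pdy_mul hY hgy,
      pdy_mul differentiableAt_fst hP, pdy_mul differentiableAt_fst hQ,
      pdy_snd_comp (p := (t,θ)) hdP, pdy_snd_comp (p := (t,θ)) hdQ, pdy_fst,
      chain_pdy hrd (t,θ) (huxd _), chain_pdy hrd (t,θ) (huyd _)]
    ring
  rw [show lap u (Phi r (t,θ)) = pdx (pdx u) q + pdy (pdy u) q from rfl,
    E1, E0, E2, E3, hsym]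
  simp only [f0, f2, f3, f4, f1]
  rw [hf1d]
  have hρ : r θ ≠ 0 := (hr_pos θ).ne'
  have htne : t ≠ 0 := ht.ne'
  have hden : r θ ^ 2 + deriv r θ ^ 2 ≠ 0 := by positivity
  have hcs : Real.sin θ ^ 2 + Real.cos θ ^ 2 = 1 := Real.sin_sq_add_cos_sq θ
  set c := Real.cos θ
  set s := Real.sin θ
  set ρ := r θ
  set ρ' := deriv r θ
  set ρ'' := deriv (deriv r) θ
  set Uxx := pdx (pdx u) q
  set Uxy := pdy (pdx u) q
  set Uyy := pdy (pdy u) q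
  set Ux := pdx u q
  set Uy := pdy u q
  field_simp
  linear_combination (-(Uxx + Uyy) * ρ ^ 3 * t) * hcs
end
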